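/- Fix n ≥ 1 and Λ ≤ 0. For K in the range K > 0, the function f_{K,Λ}(r) = ∫₀^r (K + Λtⁿ/n)/sqrt(t^{2n-2} + (K + Λtⁿ/n)²) dt is strictly increasing in K for each fixed r in the common domain 0 < r < (nK₁/|Λ|)^{1/n} (with K ≥ K₁), and f_{K,Λ}(r) → r as K → +∞ pointwise. -/

import Mathlib

open Real Filter MeasureTheory intervalIntegral

/-- The barrier profile function `f_{K,Λ}`. -/
noncomputable def barrierProfile (n : ℕ) (K Λ : ℝ) (r : ℝ) : ℝ :=
  ∫ t in (0:ℝ)..r,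
    (K + Λ * t ^ n / n) / Real.sqrt (t ^ (2 * n - 2) + (K + Λ * t ^ n / n) ^ 2)

private lemma aux_le {c x y : ℝ} (hc : 0 ≤ c) (hx : 0 < x) (hxy : x ≤ y) :
    x / Real.sqrt (c + x ^ 2) ≤ y / Real.sqrt (c + y ^ 2) := by
  have hy : 0 < y := hx.trans_le hxy
  have hdx : 0 < Real.sqrt (c + x ^ 2) := Real.sqrt_pos.2 (by positivity)
  have hdy : 0 < Real.sqrt (c + y ^ 2) := Real.sqrt_pos.2 (by positivity)
  rw [div_le_div_iff₀ hdx hdy]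
  have h2 : (x * Real.sqrt (c + y ^ 2)) ^ 2 ≤ (y * Real.sqrt (c + x ^ 2)) ^ 2 := by
    rw [mul_pow, mul_pow, Real.sq_sqrt (by positivity), Real.sq_sqrt (by positivity)]
    have hxx : x ^ 2 ≤ y ^ 2 := by nlinarith
    nlinarith
  exact le_of_pow_le_pow_left₀ two_ne_zero (by positivity) h2

private lemma aux_lt {c x y : ℝ} (hc : 0 < c) (hx : 0 ≤ x) (hxy : x < y) :
    x / Real.sqrt (c + x ^ 2) < y / Real.sqrt (c + y ^ 2) := by
  have hy : 0 < y := hx.trans_lt hxy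
  have hdx : 0 < Real.sqrt (c + x ^ 2) := Real.sqrt_pos.2 (by positivity)
  have hdy : 0 < Real.sqrt (c + y ^ 2) := Real.sqrt_pos.2 (by positivity)
  rw [div_lt_div_iff₀ hdx hdy]
  have h2 : (x * Real.sqrt (c + y ^ 2)) ^ 2 < (y * Real.sqrt (c + x ^ 2)) ^ 2 := by
    rw [mul_pow, mul_pow, Real.sq_sqrt (by positivity), Real.sq_sqrt (by positivity)]
    have hxx : x ^ 2 < y ^ 2 := by nlinarith
    nlinarith [mul_lt_mul_of_pos_right hxx hc]
  exact lt_of_pow_lt_pow_left₀ 2 (by positivity) h2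

private lemma aux_tendsto {c : ℝ} (hc : 0 ≤ c) :
    Tendsto (fun x : ℝ => x / Real.sqrt (c + x ^ 2)) atTop (nhds 1) := by
  have hlow : Tendsto (fun x : ℝ => x / (x + Real.sqrt c)) atTop (nhds 1) := by
    have h1 : Tendsto (fun x : ℝ => 1 + Real.sqrt c / x) atTop (nhds 1) := by
      simpa using tendsto_const_nhds.add
        (Tendsto.div_atTop (tendsto_const_nhds (x := Real.sqrt c)) tendsto_id)
    have h2 := (h1.inv₀ one_ne_zero)
    rw [inv_one] at h2
    refine h2.congr' ?_
    filter_upwards [eventually_gt_atTop 0] with x hx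
    have hxc : 0 < x + Real.sqrt c := by positivity
    field_simp
  refine tendsto_of_tendsto_of_tendsto_of_le_of_le' hlow tendsto_const_nhds ?_ ?_
  · filter_upwards [eventually_gt_atTop 0] with x hx
    have hs : Real.sqrt (c + x ^ 2) ≤ x + Real.sqrt c := by
      rw [show x + Real.sqrt c = Real.sqrt ((x + Real.sqrt c) ^ 2) from
        (Real.sqrt_sq (by positivity)).symm]
      apply Real.sqrt_le_sqrt
      have : Real.sqrt c ^ 2 = c := Real.sq_sqrt hc
      nlinarith [Real.sqrt_nonneg c]
    exact div_le_div_of_nonneg_left hx.le (Real.sqrt_pos.2 (by positivity)) hs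
  · filter_upwards [eventually_gt_atTop 0] with x hx
    rw [div_le_one (Real.sqrt_pos.2 (by positivity))]
    calc x = Real.sqrt (x ^ 2) := (Real.sqrt_sq hx.le).symm
    _ ≤ Real.sqrt (c + x ^ 2) := Real.sqrt_le_sqrt (by linarith)

/-- For fixed `Λ ≤ 0` and `r` in the common domain determined by `K₁ > 0`,
the barrier profile `f_{K,Λ}(r)` is strictly increasing in `K ≥ K₁`, and
`f_{K,Λ}(r) → r` as `K → +∞`. -/
theorem barrierProfile_strictMono_and_tendsto
    {n : ℕ} (hn : 1 ≤ n) {K₁ Λ r : ℝ} (hK₁ : 0 < K₁) (hΛ : Λ ≤ 0)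
    (hr : 0 < r) (hdom : Λ < 0 → r < (n * K₁ / |Λ|) ^ ((1:ℝ) / n)) :
    (∀ K K' : ℝ, K₁ ≤ K → K < K' →
        barrierProfile n K Λ r < barrierProfile n K' Λ r) ∧
      Filter.Tendsto (fun K => barrierProfile n K Λ r) Filter.atTop (nhds r) := by
  have hn0 : (0:ℝ) < n := by exact_mod_cast Nat.lt_of_lt_of_le Nat.zero_lt_one hn
  have hnne : n ≠ 0 := by omega
  have hcore : 0 < K₁ + Λ * r ^ n / n := by
    rcases lt_or_eq_of_le hΛ with hΛneg | hΛ0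
    · have hB : 0 < (n:ℝ) * K₁ / (-Λ) := div_pos (by positivity) (by linarith)
      have hd := hdom hΛneg
      rw [abs_of_neg hΛneg] at hd
      have hrn : r ^ n < (n:ℝ) * K₁ / (-Λ) := by
        have h1 : r ^ n < (((n:ℝ) * K₁ / (-Λ)) ^ ((1:ℝ)/n)) ^ n :=
          pow_lt_pow_left₀ hd hr.le hnne
        rwa [← Real.rpow_natCast (((n:ℝ) * K₁ / (-Λ)) ^ ((1:ℝ)/n)) n,
          ← Real.rpow_mul hB.le, one_div,
          inv_mul_cancel₀ (by exact_mod_cast hnne), Real.rpow_one] at h1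
      have h2 : (-Λ) * r ^ n < (-Λ) * ((n:ℝ) * K₁ / (-Λ)) :=
        mul_lt_mul_of_pos_left hrn (by linarith)
      rw [mul_div_cancel₀ _ (by linarith : (-Λ) ≠ 0)] at h2
      have h3 : -K₁ < Λ * r ^ n / n := by rw [lt_div_iff₀ hn0]; nlinarith
      linarith
    · subst hΛ0; simpa using hK₁
  have hA : ∀ K : ℝ, K₁ ≤ K → ∀ t ∈ Set.Icc (0:ℝ) r, 0 < K + Λ * t ^ n / n := by
    intro K hK t ht
    have htn : t ^ n ≤ r ^ n := pow_le_pow_left₀ ht.1 ht.2 n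
    have h1 : Λ * r ^ n ≤ Λ * t ^ n := mul_le_mul_of_nonpos_left htn hΛ
    have h2 : Λ * r ^ n / n ≤ Λ * t ^ n / n := (div_le_div_iff_of_pos_right hn0).mpr h1
    linarith
  have hcont : ∀ K : ℝ, K₁ ≤ K → ContinuousOn
      (fun t => (K + Λ * t ^ n / n) / Real.sqrt (t ^ (2 * n - 2) + (K + Λ * t ^ n / n) ^ 2))
      (Set.Icc 0 r) := by
    intro K hK
    apply ContinuousOn.div
    · fun_prop
    · fun_prop
    · intro t ht
      have hden : 0 < t ^ (2 * n - 2) + (K + Λ * t ^ n / n) ^ 2 := by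
        have := hA K hK t ht
        have h0 : 0 ≤ t ^ (2 * n - 2) := pow_nonneg ht.1 _
        positivity
      exact (Real.sqrt_pos.2 hden).ne'
  constructor
  · intro K K' hK hKK'
    have hK' : K₁ ≤ K' := hK.trans hKK'.le
    apply intervalIntegral.integral_lt_integral_of_continuousOn_of_le_of_exists_lt hr
      (hcont K hK) (hcont K' hK')
    · intro t ht
      have ht' : t ∈ Set.Icc (0:ℝ) r := ⟨ht.1.le, ht.2⟩
      exact aux_le (pow_nonneg ht.1.le _) (hA K hK t ht') (by linarith)
    · refine ⟨r, Set.right_mem_Icc.2 hr.le, ?_⟩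
      exact aux_lt (pow_pos hr _) (hA K hK r (Set.right_mem_Icc.2 hr.le)).le (by linarith)
  · have hmain : Tendsto (fun K => barrierProfile n K Λ r) atTop
        (nhds (∫ t in (0:ℝ)..r, (1:ℝ))) := by
      apply intervalIntegral.tendsto_integral_filter_of_dominated_convergence
        (bound := fun _ => (1:ℝ)) (f := fun _ => (1:ℝ))
      · refine Eventually.of_forall fun K => ?_
        apply Measurable.aestronglyMeasurable
        fun_prop
      · refine Eventually.of_forall fun K => ae_of_all _ fun t ht => ?_
        rw [Set.uIoc_of_le hr.le] at ht
        have hden : 0 < t ^ (2 * n - 2) + (K + Λ * t ^ n / n) ^ 2 := by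
          have h0 : 0 < t ^ (2 * n - 2) := pow_pos ht.1 _
          positivity
        rw [Real.norm_eq_abs, abs_div, abs_of_nonneg (Real.sqrt_nonneg _),
          div_le_one (Real.sqrt_pos.2 hden)]
        calc |K + Λ * t ^ n / n| = Real.sqrt ((K + Λ * t ^ n / n) ^ 2) :=
              (Real.sqrt_sq_eq_abs _).symm
          _ ≤ Real.sqrt (t ^ (2 * n - 2) + (K + Λ * t ^ n / n) ^ 2) :=
              Real.sqrt_le_sqrt (by nlinarith [pow_pos ht.1 (2 * n - 2)])
      · exact intervalIntegrable_const
      · refine ae_of_all _ fun t ht => ?_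
        rw [Set.uIoc_of_le hr.le] at ht
        have hc : (0:ℝ) < t ^ (2 * n - 2) := pow_pos ht.1 _
        have := (aux_tendsto hc.le).comp
          (tendsto_atTop_add_const_right atTop (Λ * t ^ n / n) tendsto_id)
        simpa [Function.comp_def] using this
    simpa using hmain
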